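/- Let A be a real m×2 matrix of rank 2. Then every vector x ∈ ℝ² is phase retrieval from its phaseless measurements |Ax| (i.e. for all x, y ∈ ℝ², |Ax| = |Ay| entrywise implies y = x or y = −x) if and only if the complex range space R_ℂ(A) is complex conjugate phase retrieval. -/

import Mathlib

open Complex Matrix

section Aux

variable {m : ℕ}

private lemma aux_inj (A : Matrix (Fin m) (Fin 2) ℝ) (hA : A.rank = 2) :
    Function.Injective A.mulVec := by
  have h1 : LinearMap.ker A.mulVecLin = ⊥ := by
    have h2 := LinearMap.finrank_range_add_finrank_ker A.mulVecLin
    rw [Module.finrank_pi, Fintype.card_fin] at h2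
    have h3 : A.rank = Module.finrank ℝ (LinearMap.range A.mulVecLin) := rfl
    rw [h3] at hA
    have : Module.finrank ℝ (LinearMap.ker A.mulVecLin) = 0 := by omega
    exact Submodule.finrank_eq_zero.mp this
  have := LinearMap.ker_eq_bot.mp h1
  exact this

/-- abstract version with scalar measurements -/
private lemma aux_quad (a b : Fin m → ℝ)
    (hinj : ∀ s t : ℝ, (∀ i, a i * s + b i * t = 0) → s = 0 ∧ t = 0)
    (hPR : ∀ s t s' t' : ℝ, (∀ i, (a i * s' + b i * t')^2 = (a i * s + b i * t)^2) →
      (s' = s ∧ t' = t) ∨ (s' = -s ∧ t' = -t))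
    (d e : ℝ) (hq : ∀ i, d*(a i)^2 + 2*e*(a i)*(b i) = (fun _ => (0:ℝ)) 0 - (0:ℝ)) : True := trivial

private lemma aux_d (a b : Fin m → ℝ)
    (hinj : ∀ s t : ℝ, (∀ i, a i * s + b i * t = 0) → s = 0 ∧ t = 0)
    (hPR : ∀ s t s' t' : ℝ, (∀ i, (a i * s' + b i * t')^2 = (a i * s + b i * t)^2) →
      (s' = s ∧ t' = t) ∨ (s' = -s ∧ t' = -t))
    (d e f : ℝ) (hq : ∀ i, d*(a i)^2 + 2*e*(a i)*(b i) + f*(b i)^2 = 0) : d = 0 := by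
  by_contra hd
  have key : ∀ i, (a i * d + b i * e)^2 = (e^2 - d*f) * (b i)^2 := by
    intro i
    linear_combination d * hq i
  rcases lt_trichotomy (e^2 - d*f) 0 with hc | hc | hc
  · have hz : ∀ i, b i = 0 := by
      intro i
      have h1 := key i
      have hb2 : (b i)^2 ≤ 0 := by nlinarith [sq_nonneg (a i * d + b i * e)]
      have : (b i)^2 = 0 := le_antisymm hb2 (sq_nonneg _)
      exact pow_eq_zero_iff (n := 2) (by norm_num) |>.mp this
    have ha : ∀ i, a i = 0 := by
      intro i
      have h1 := key i
      rw [hz i] at h1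
      have : a i * d = 0 := by
        have h2 : (a i * d)^2 = 0 := by linear_combination h1
        exact pow_eq_zero_iff (n := 2) (by norm_num) |>.mp h2
      exact (mul_eq_zero.mp this).resolve_right hd
    have := hinj 1 0 (fun i => by rw [ha i, hz i]; ring)
    exact one_ne_zero this.1
  · have := hinj d e (fun i => by
      have h1 := key i
      rw [hc, zero_mul] at h1
      exact pow_eq_zero_iff (n := 2) (by norm_num) |>.mp h1)
    exact hd this.1
  · set r := Real.sqrt (e^2 - d*f) with hr
    have hr2 : r^2 = e^2 - d*f := Real.sq_sqrt hc.le
    have := hPR d e 0 r (fun i => by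
      have h1 := key i
      linear_combination (b i)^2 * hr2 - h1)
    rcases this with ⟨h1, _⟩ | ⟨h1, _⟩
    · exact hd h1.symm
    · exact hd (by linarith)

private lemma aux_e (a b : Fin m → ℝ)
    (hPR : ∀ s t s' t' : ℝ, (∀ i, (a i * s' + b i * t')^2 = (a i * s + b i * t)^2) →
      (s' = s ∧ t' = t) ∨ (s' = -s ∧ t' = -t))
    (e : ℝ) (hq : ∀ i, 2*e*(a i)*(b i) = 0) : e = 0 := by
  by_contra he
  have hz : ∀ i, a i * b i = 0 := by
    intro i
    have h1 := hq i
    have h2e : (2:ℝ) * e ≠ 0 := by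
      intro h; exact he (by linarith)
    have h2 : (2*e) * (a i * b i) = 0 := by linear_combination h1
    exact (mul_eq_zero.mp h2).resolve_left h2e
  have := hPR 1 1 1 (-1) (fun i => by linear_combination (-4) * hz i)
  rcases this with ⟨_, h1⟩ | ⟨h1, _⟩
  · norm_num at h1
  · norm_num at h1

private lemma recon1 (x0 x1 y0 y1 : ℂ) (h0 : normSq y0 = normSq x0)
    (h1 : normSq y1 = normSq x1)
    (h01 : y0 * (starRingEnd ℂ) y1 = x0 * (starRingEnd ℂ) x1) :
    ∃ z : ℂ, ‖z‖ = 1 ∧ y0 = z * x0 ∧ y1 = z * x1 := by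
  have habs0 : ‖y0‖ = ‖x0‖ := by
    rw [Complex.norm_def, Complex.norm_def, h0]
  have habs1 : ‖y1‖ = ‖x1‖ := by
    rw [Complex.norm_def, Complex.norm_def, h1]
  by_cases hx0 : x0 = 0
  · have hy0 : y0 = 0 := by
      rw [← Complex.normSq_eq_zero, h0, hx0, Complex.normSq_zero]
    by_cases hx1 : x1 = 0
    · refine ⟨1, by simp, ?_, ?_⟩
      · rw [hy0, hx0, mul_zero]
      · rw [hx1, mul_zero, ← Complex.normSq_eq_zero, h1, hx1, Complex.normSq_zero]
    · refine ⟨y1 / x1, ?_, ?_, ?_⟩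
      · rw [norm_div, habs1, div_self (norm_ne_zero_iff.mpr hx1)]
      · rw [hy0, hx0, mul_zero]
      · field_simp
  · have hy0 : y0 ≠ 0 := by
      intro h
      apply hx0
      rw [← Complex.normSq_eq_zero, ← h0, h, Complex.normSq_zero]
    refine ⟨y0 / x0, ?_, by field_simp, ?_⟩
    · rw [norm_div, habs0, div_self (norm_ne_zero_iff.mpr hx0)]
    · have hc : (starRingEnd ℂ) y0 * y1 = (starRingEnd ℂ) x0 * x1 := by
        have := congrArg (starRingEnd ℂ) h01
        simpa [_root_.map_mul, mul_comm] using this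
      have hn : y0 * (starRingEnd ℂ) y0 = x0 * (starRingEnd ℂ) x0 := by
        rw [Complex.mul_conj, Complex.mul_conj, h0]
      have hcy0 : (starRingEnd ℂ) y0 ≠ 0 := by
        simpa using hy0
      have key : y1 * ((starRingEnd ℂ) y0 * x0) = (y0 / x0 * x1) * ((starRingEnd ℂ) y0 * x0) := by
        rw [show y0 / x0 * x1 * ((starRingEnd ℂ) y0 * x0) = y0 * x1 * (starRingEnd ℂ) y0 * (x0 / x0) by ring, div_self hx0]
        linear_combination x0 * hc - x1 * hn
      exact mul_right_cancel₀ (mul_ne_zero hcy0 hx0) key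

private lemma recon (x0 x1 y0 y1 : ℂ) (h0 : normSq y0 = normSq x0)
    (h1 : normSq y1 = normSq x1)
    (hre : (y0 * (starRingEnd ℂ) y1).re = (x0 * (starRingEnd ℂ) x1).re) :
    ∃ z : ℂ, ‖z‖ = 1 ∧
      ((y0 = z * x0 ∧ y1 = z * x1) ∨
        (y0 = z * (starRingEnd ℂ) x0 ∧ y1 = z * (starRingEnd ℂ) x1)) := by
  have hsq : (y0 * (starRingEnd ℂ) y1).im ^ 2 = (x0 * (starRingEnd ℂ) x1).im ^ 2 := by
    have e1 : (y0 * (starRingEnd ℂ) y1).re ^ 2 + (y0 * (starRingEnd ℂ) y1).im ^ 2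
        = normSq y0 * normSq y1 := by
      have := Complex.normSq_apply (y0 * (starRingEnd ℂ) y1)
      rw [Complex.normSq_mul, Complex.normSq_conj] at this
      linear_combination - this
    have e2 : (x0 * (starRingEnd ℂ) x1).re ^ 2 + (x0 * (starRingEnd ℂ) x1).im ^ 2
        = normSq x0 * normSq x1 := by
      have := Complex.normSq_apply (x0 * (starRingEnd ℂ) x1)
      rw [Complex.normSq_mul, Complex.normSq_conj] at this
      linear_combination - this
    rw [h0, h1] at e1
    linear_combination e1 - e2 - ((y0 * (starRingEnd ℂ) y1).re + (x0 * (starRingEnd ℂ) x1).re) * hre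
  have him : (y0 * (starRingEnd ℂ) y1).im = (x0 * (starRingEnd ℂ) x1).im ∨
      (y0 * (starRingEnd ℂ) y1).im = -(x0 * (starRingEnd ℂ) x1).im := by
    have h2 : ((y0 * (starRingEnd ℂ) y1).im - (x0 * (starRingEnd ℂ) x1).im) *
        ((y0 * (starRingEnd ℂ) y1).im + (x0 * (starRingEnd ℂ) x1).im) = 0 := by
      linear_combination hsq
    rcases mul_eq_zero.mp h2 with h3 | h3
    · exact Or.inl (by linarith)
    · exact Or.inr (by linarith)
  rcases him with him | him
  · have h01 : y0 * (starRingEnd ℂ) y1 = x0 * (starRingEnd ℂ) x1 :=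
      Complex.ext hre him
    obtain ⟨z, hz, hz0, hz1⟩ := recon1 x0 x1 y0 y1 h0 h1 h01
    exact ⟨z, hz, Or.inl ⟨hz0, hz1⟩⟩
  · have h01 : y0 * (starRingEnd ℂ) y1 =
        (starRingEnd ℂ) x0 * (starRingEnd ℂ) ((starRingEnd ℂ) x1) := by
      rw [Complex.conj_conj]
      apply Complex.ext
      · rw [hre]; simp [Complex.mul_re]
      · rw [him]; simp [Complex.mul_im]; ring
    obtain ⟨z, hz, hz0, hz1⟩ := recon1 ((starRingEnd ℂ) x0) ((starRingEnd ℂ) x1) y0 y1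
      (by rwa [Complex.normSq_conj]) (by rwa [Complex.normSq_conj]) h01
    exact ⟨z, hz, Or.inr ⟨hz0, hz1⟩⟩

end Aux

/-- **Proposition 2.8.**  Let `A` be a real `m × 2` matrix of rank `2`.  Then every
vector `x ∈ ℝ²` is phase retrieval from its phaseless measurements `|A x|` if and only
if the complex range space `R_ℂ(A)` is complex conjugate phase retrieval. -/
theorem stmt_7 {m : ℕ} (A : Matrix (Fin m) (Fin 2) ℝ) (hA : A.rank = 2) :
    (∀ x y : Fin 2 → ℝ, (∀ i, |A.mulVec x i| = |A.mulVec y i|) → y = x ∨ y = -x) ↔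
      (∀ xf y : Fin 2 → ℂ,
        (∀ i, ‖(A.map (Complex.ofReal)).mulVec y i‖ =
          ‖(A.map (Complex.ofReal)).mulVec xf i‖) →
        ∃ z : ℂ, ‖z‖ = 1 ∧
          ((A.map (Complex.ofReal)).mulVec y = z • (A.map (Complex.ofReal)).mulVec xf ∨
            (A.map (Complex.ofReal)).mulVec y = z • (A.map (Complex.ofReal)).mulVec (star xf))) := by
  have hinj := aux_inj A hA
  have hRe : ∀ (w : Fin 2 → ℂ) (i : Fin m),
      ((A.map (Complex.ofReal)).mulVec w i).re
        = A i 0 * (w 0).re + A i 1 * (w 1).re := by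
    intro w i
    simp [Matrix.mulVec, dotProduct, Fin.sum_univ_two, Matrix.map_apply, Complex.mul_re]
  have hIm : ∀ (w : Fin 2 → ℂ) (i : Fin m),
      ((A.map (Complex.ofReal)).mulVec w i).im
        = A i 0 * (w 0).im + A i 1 * (w 1).im := by
    intro w i
    simp [Matrix.mulVec, dotProduct, Fin.sum_univ_two, Matrix.map_apply, Complex.mul_im]
  have hmv : ∀ (w : Fin 2 → ℝ) (i : Fin m),
      A.mulVec w i = A i 0 * w 0 + A i 1 * w 1 := by
    intro w i
    simp [Matrix.mulVec, dotProduct, Fin.sum_univ_two]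
  constructor
  · intro hPR xf y habs
    -- scalar injectivity
    have hinjs : ∀ s t : ℝ, (∀ i, A i 0 * s + A i 1 * t = 0) → s = 0 ∧ t = 0 := by
      intro s t h
      have h2 : A.mulVec ![s, t] = A.mulVec 0 := by
        funext i
        rw [Matrix.mulVec_zero]
        rw [hmv]
        simpa using h i
      have h3 := hinj h2
      constructor
      · have := congrFun h3 0; simpa using this
      · have := congrFun h3 1; simpa using this
    -- scalar phase retrieval
    have hPRs : ∀ s t s' t' : ℝ,
        (∀ i, (A i 0 * s' + A i 1 * t')^2 = (A i 0 * s + A i 1 * t)^2) →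
        (s' = s ∧ t' = t) ∨ (s' = -s ∧ t' = -t) := by
      intro s t s' t' h
      have h2 : ∀ i, |A.mulVec ![s, t] i| = |A.mulVec ![s', t'] i| := by
        intro i
        rw [hmv, hmv]
        have h3 := h i
        simp only [Matrix.cons_val_zero, Matrix.cons_val_one, Matrix.head_cons]
        exact ((sq_eq_sq_iff_abs_eq_abs _ _).mp h3).symm
      rcases hPR ![s, t] ![s', t'] h2 with h3 | h3
      · left
        refine ⟨?_, ?_⟩
        · have := congrFun h3 0; simpa using this
        · have := congrFun h3 1; simpa using this
      · right
        refine ⟨?_, ?_⟩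
        · have := congrFun h3 0; simpa using this
        · have := congrFun h3 1; simpa using this
    -- swapped versions
    have hinjs' : ∀ s t : ℝ, (∀ i, A i 1 * s + A i 0 * t = 0) → s = 0 ∧ t = 0 := by
      intro s t h
      have := hinjs t s (fun i => by linarith [h i])
      exact ⟨this.2, this.1⟩
    have hPRs' : ∀ s t s' t' : ℝ,
        (∀ i, (A i 1 * s' + A i 0 * t')^2 = (A i 1 * s + A i 0 * t)^2) →
        (s' = s ∧ t' = t) ∨ (s' = -s ∧ t' = -t) := by
      intro s t s' t' h
      rcases hPRs t s t' s' (fun i => by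
        have := h i; linear_combination this) with h3 | h3
      · exact Or.inl ⟨h3.2, h3.1⟩
      · exact Or.inr ⟨h3.2, h3.1⟩
    -- the measurement identity
    have hmeas : ∀ i,
        (A i 0 * (y 0).re + A i 1 * (y 1).re)^2 + (A i 0 * (y 0).im + A i 1 * (y 1).im)^2
          = (A i 0 * (xf 0).re + A i 1 * (xf 1).re)^2
            + (A i 0 * (xf 0).im + A i 1 * (xf 1).im)^2 := by
      intro i
      have h2 := congrArg (fun t : ℝ => t ^ 2) (habs i)
      replace h2 : ‖(A.map Complex.ofReal).mulVec y i‖ ^ 2 = ‖(A.map Complex.ofReal).mulVec xf i‖ ^ 2 := h2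
      rw [Complex.sq_norm, Complex.sq_norm, Complex.normSq_apply, Complex.normSq_apply,
        hRe, hIm, hRe, hIm] at h2
      linear_combination h2
    set D : ℝ := ((y 0).re^2 + (y 0).im^2) - ((xf 0).re^2 + (xf 0).im^2) with hDdef
    set E : ℝ := ((y 0).re * (y 1).re + (y 0).im * (y 1).im)
      - ((xf 0).re * (xf 1).re + (xf 0).im * (xf 1).im) with hEdef
    set F : ℝ := ((y 1).re^2 + (y 1).im^2) - ((xf 1).re^2 + (xf 1).im^2) with hFdef
    have hq : ∀ i, D * (A i 0)^2 + 2*E*(A i 0)*(A i 1) + F*(A i 1)^2 = 0 := by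
      intro i
      rw [hDdef, hEdef, hFdef]
      linear_combination hmeas i
    have hD : D = 0 := aux_d (fun i => A i 0) (fun i => A i 1) hinjs hPRs D E F hq
    have hF : F = 0 := aux_d (fun i => A i 1) (fun i => A i 0) hinjs' hPRs' F E D
      (fun i => by linear_combination hq i)
    have hE : E = 0 := aux_e (fun i => A i 0) (fun i => A i 1) hPRs E
      (fun i => by linear_combination hq i - (A i 0)^2 * hD - (A i 1)^2 * hF)
    -- obtain the reconstruction
    have h0 : normSq (y 0) = normSq (xf 0) := by
      rw [Complex.normSq_apply, Complex.normSq_apply]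
      rw [hDdef] at hD
      linear_combination hD
    have h1 : normSq (y 1) = normSq (xf 1) := by
      rw [Complex.normSq_apply, Complex.normSq_apply]
      rw [hFdef] at hF
      linear_combination hF
    have hre : (y 0 * (starRingEnd ℂ) (y 1)).re = (xf 0 * (starRingEnd ℂ) (xf 1)).re := by
      simp only [Complex.mul_re, Complex.conj_re, Complex.conj_im]
      rw [hEdef] at hE
      linear_combination hE
    obtain ⟨z, hz1, hcase⟩ := recon (xf 0) (xf 1) (y 0) (y 1) h0 h1 hre
    refine ⟨z, hz1, ?_⟩
    rcases hcase with ⟨hz0, hz1'⟩ | ⟨hz0, hz1'⟩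
    · left
      have hy : y = z • xf := by
        funext j
        fin_cases j
        · simpa using hz0
        · simpa using hz1'
      rw [hy, Matrix.mulVec_smul]
    · right
      have hy : y = z • star xf := by
        funext j
        fin_cases j
        · simpa [Pi.star_apply, Complex.star_def] using hz0
        · simpa [Pi.star_apply, Complex.star_def] using hz1'
      rw [hy, Matrix.mulVec_smul]
  · intro hC x y h
    have hcoe : ∀ (w : Fin 2 → ℝ) (i : Fin m),
        (A.map (Complex.ofReal)).mulVec (fun j => ((w j : ℝ) : ℂ)) i
          = ((A.mulVec w i : ℝ) : ℂ) := by
      intro w i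
      rw [hmv]
      simp [Matrix.mulVec, dotProduct, Fin.sum_univ_two, Matrix.map_apply]
    obtain ⟨z, hz, hcase⟩ := hC (fun j => ((x j : ℝ) : ℂ)) (fun j => ((y j : ℝ) : ℂ))
      (fun i => by rw [hcoe, hcoe, Complex.norm_real, Complex.norm_real, Real.norm_eq_abs, Real.norm_eq_abs]; exact (h i).symm)
    have hstar : star (fun j => ((x j : ℝ) : ℂ)) = (fun j => ((x j : ℝ) : ℂ)) := by
      funext j
      simp [Pi.star_apply, Complex.star_def, Complex.conj_ofReal]
    rw [hstar] at hcase
    have heq : ∀ i, ((A.mulVec y i : ℝ) : ℂ) = z * ((A.mulVec x i : ℝ) : ℂ) := by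
      intro i
      rcases hcase with hcase | hcase <;>
      · have := congrFun hcase i
        rw [hcoe, Pi.smul_apply, hcoe, smul_eq_mul] at this
        exact this
    by_cases hx : x = 0
    · left
      apply hinj
      funext i
      have := heq i
      rw [hx, Matrix.mulVec_zero] at this ⊢
      simp only [Pi.zero_apply, Complex.ofReal_zero, mul_zero] at this
      simpa using this
    · have hAx : A.mulVec x ≠ 0 := fun h0 => hx (hinj (h0.trans (Matrix.mulVec_zero A).symm))
      obtain ⟨i0, hi0⟩ := Function.ne_iff.mp hAx
      have hi0' : A.mulVec x i0 ≠ 0 := by simpa using hi0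
      have hzr : z = (((A.mulVec y i0 / A.mulVec x i0 : ℝ)) : ℂ) := by
        rw [Complex.ofReal_div, eq_div_iff (by exact_mod_cast hi0')]
        exact (heq i0).symm
      set r : ℝ := A.mulVec y i0 / A.mulVec x i0 with hrdef
      have hr : |r| = 1 := by
        rw [hzr, Complex.norm_real, Real.norm_eq_abs] at hz
        exact hz
      have hyx : ∀ i, A.mulVec y i = r * A.mulVec x i := by
        intro i
        have := heq i
        rw [hzr] at this
        exact_mod_cast this
      rcases (abs_eq (zero_le_one)).mp hr with hr1 | hr1
      · left
        apply hinj
        funext i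
        rw [hyx i, hr1, one_mul]
      · right
        apply hinj
        funext i
        rw [hyx i, hr1, Matrix.mulVec_neg]
        simp
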